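/- Let x_0 ∈ ℝ^n, let x* be the unique point with A x* = b and x* ∈ x_0 + R(Aᵀ), let r_0 := g − C x_0, and suppose x_k is the unique minimizer of ‖x − x*‖² over x_0 + K_k(C,r_0). If r_k := g − C x_k ≠ 0 (equivalently P(x_k) ≠ x_k), then r_k ∉ K_k(C,r_0); in particular, the component of r_k orthogonal to K_k(C,r_0) is nonzero. -/

import Mathlib

open scoped RealInnerProductSpace

noncomputable section

abbrev Euc (n : ℕ) := EuclideanSpace ℝ (Fin n)

/-- Intermediate Kaczmarz chain: `chainK Pj x j` is `y_j` with `y_0 = x`, `y_{j+1} = P_{j+1}(y_j)`. -/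
def chainK {n p : ℕ} (Pj : Fin p → Euc n → Euc n) (x : Euc n) : ℕ → Euc n
  | 0 => x
  | j + 1 => if h : j < p then Pj ⟨j, h⟩ (chainK Pj x j) else chainK Pj x j

/-- The block Kaczmarz operator `P = P_p ∘ ⋯ ∘ P_1`. -/
def kacz {n p : ℕ} (Pj : Fin p → Euc n → Euc n) (x : Euc n) : Euc n := chainK Pj x p

/-- `f` sends each point to the (unique) nearest point of `S`. -/
def IsNearestPointMap {n : ℕ} (S : Set (Euc n)) (f : Euc n → Euc n) : Prop :=
  ∀ x, f x ∈ S ∧ ∀ y ∈ S, dist x (f x) ≤ dist x y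

/-- The stacked (full) matrix `A` with blocks `A_j`. -/
def fullA {n p : ℕ} (m : Fin p → ℕ)
    (A : ∀ j : Fin p, Euc n →ₗ[ℝ] Euc (m j)) :
    Euc n →ₗ[ℝ] PiLp 2 (fun j => Euc (m j)) :=
  (WithLp.linearEquiv 2 ℝ (∀ j, Euc (m j))).symm.toLinearMap ∘ₗ LinearMap.pi A

/-- The range of `Aᵀ` for the stacked matrix. -/
def RAT {n p : ℕ} (m : Fin p → ℕ)
    (A : ∀ j : Fin p, Euc n →ₗ[ℝ] Euc (m j)) : Submodule ℝ (Euc n) :=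
  LinearMap.range (LinearMap.adjoint (fullA m A))

/-- Orthogonal projection onto a subspace, as an endomorphism. -/
def projSub {n : ℕ} (K : Submodule ℝ (Euc n)) : Euc n →ₗ[ℝ] Euc n :=
  K.subtype ∘ₗ (Submodule.orthogonalProjectionOnto K).toLinearMap

/-- `Tchain m A j = Q_j ∘ ⋯ ∘ Q_1`, with `Q_i` the orthogonal projection onto `N(A_i)`. -/
def Tchain {n p : ℕ} (m : Fin p → ℕ)
    (A : ∀ j : Fin p, Euc n →ₗ[ℝ] Euc (m j)) :
    ℕ → (Euc n →ₗ[ℝ] Euc n)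
  | 0 => LinearMap.id
  | j + 1 => if h : j < p then projSub (LinearMap.ker (A ⟨j, h⟩)) ∘ₗ Tchain m A j
             else Tchain m A j

/-- `T = Q_p ∘ ⋯ ∘ Q_1`. -/
def Tmap {n p : ℕ} (m : Fin p → ℕ)
    (A : ∀ j : Fin p, Euc n →ₗ[ℝ] Euc (m j)) : Euc n →ₗ[ℝ] Euc n :=
  Tchain m A p

/-- `C = I - T`. -/
def Cmap {n p : ℕ} (m : Fin p → ℕ)
    (A : ∀ j : Fin p, Euc n →ₗ[ℝ] Euc (m j)) : Euc n →ₗ[ℝ] Euc n :=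
  LinearMap.id - Tmap m A

/-- The Krylov space `K_k(C, r) = span(r, Cr, …, C^{k-1} r)`. -/
def krylov {n : ℕ} (C : Euc n →ₗ[ℝ] Euc n) (r : Euc n) (k : ℕ) : Submodule ℝ (Euc n) :=
  Submodule.span ℝ {v | ∃ i < k, v = (C ^ i) r}

/-- `z` is the unique minimizer of `‖x - xs‖²` over `S`. -/
def IsUniqueMinimizer {n : ℕ} (xs : Euc n) (S : Set (Euc n)) (z : Euc n) : Prop :=
  z ∈ S ∧ ∀ y ∈ S, y ≠ z → ‖z - xs‖ ^ 2 < ‖y - xs‖ ^ 2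

/-- The affine Krylov space `x₀ + K_k(C, r)` as a set. -/
def affKrylov {n : ℕ} (x0 : Euc n) (C : Euc n →ₗ[ℝ] Euc n) (r : Euc n) (k : ℕ) :
    Set (Euc n) :=
  (fun v => x0 + v) '' (krylov C r k : Set (Euc n))

lemma nearest_eq {n m : ℕ} (A : Euc n →ₗ[ℝ] Euc m) (b : Euc m)
    (f : Euc n → Euc n) (hf : IsNearestPointMap {z | A z = b} f)
    (c : Euc n) (hc : A c = b) (x : Euc n) :
    f x = c + projSub (LinearMap.ker A) (x - c) := by
  set K := LinearMap.ker A
  set w := x - c with hw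
  set q : Euc n := (Submodule.orthogonalProjectionOnto K w : Euc n) with hq
  have hqK : q ∈ K := SetLike.coe_mem _
  have h1 : c + q ∈ {z : Euc n | A z = b} := by
    have : A q = 0 := LinearMap.mem_ker.mp hqK
    simp [Set.mem_setOf_eq, map_add, hc, this]
  have hmem : A (f x) = b := (hf x).1
  have huK : f x - c ∈ K := by
    simp [K, LinearMap.mem_ker, map_sub, hmem, hc]
  set u := f x - c with hu
  have hle : ‖w - u‖ ≤ ‖w - q‖ := by
    have := (hf x).2 _ h1
    rw [dist_eq_norm, dist_eq_norm] at this
    have e1 : x - f x = w - u := by rw [hw, hu]; abel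
    have e2 : x - (c + q) = w - q := by rw [hw]; abel
    rwa [e1, e2] at this
  have horth : ⟪w - q, q - u⟫ = 0 := by
    have h1 : w - q ∈ Kᗮ := K.sub_starProjection_mem_orthogonal w
    have h2 : q - u ∈ K := K.sub_mem hqK huK
    exact (Submodule.mem_orthogonal' K _).mp h1 _ h2
  have hpy : ‖w - u‖ ^ 2 = ‖w - q‖ ^ 2 + ‖q - u‖ ^ 2 := by
    have e : w - u = (w - q) + (q - u) := by abel
    rw [e, norm_add_sq_real, horth]; ring
  have : ‖q - u‖ ^ 2 ≤ 0 := by nlinarith [norm_nonneg (w - u), norm_nonneg (w - q)]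
  have hqu : q = u := by
    have hz : ‖q - u‖ = 0 := le_antisymm (by nlinarith [norm_nonneg (q - u)]) (norm_nonneg _)
    exact sub_eq_zero.mp (norm_eq_zero.mp hz)
  have hfx : f x = c + u := by rw [hu]; abel
  rw [hfx, ← hqu]; rfl

lemma proj_norm_le {n : ℕ} (K : Submodule ℝ (Euc n)) (v : Euc n) :
    ‖projSub K v‖ ≤ ‖v‖ := by
  have h := Submodule.orthogonalProjectionOnto_norm_le K
  calc ‖projSub K v‖ = ‖Submodule.orthogonalProjectionOnto K v‖ := rfl
    _ ≤ ‖Submodule.orthogonalProjectionOnto K‖ * ‖v‖ := (Submodule.orthogonalProjectionOnto K).le_opNorm v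
    _ ≤ 1 * ‖v‖ := by gcongr
    _ = ‖v‖ := one_mul _

lemma chain_affine {n p : ℕ} (msz : Fin p → ℕ)
    (A : ∀ j : Fin p, Euc n →ₗ[ℝ] Euc (msz j)) (b : ∀ j : Fin p, Euc (msz j))
    (Pj : Fin p → Euc n → Euc n)
    (hPj : ∀ j : Fin p, IsNearestPointMap {z : Euc n | A j z = b j} (Pj j))
    (xs : Euc n) (hxs : ∀ j, A j xs = b j) (x : Euc n) :
    ∀ j, chainK Pj x j - chainK Pj (0 : Euc n) j = Tchain msz A j x := by
  intro j
  induction j with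
  | zero => simp [chainK, Tchain]
  | succ j ih =>
    by_cases h : j < p
    · have e1 : chainK Pj x (j+1) = Pj ⟨j,h⟩ (chainK Pj x j) := by
        simp [chainK, h]
      have e2 : chainK Pj (0 : Euc n) (j+1) = Pj ⟨j,h⟩ (chainK Pj (0 : Euc n) j) := by
        simp [chainK, h]
      have e3 : Tchain msz A (j+1) x = projSub (LinearMap.ker (A ⟨j,h⟩)) (Tchain msz A j x) := by
        simp [Tchain, h]
      rw [e1, e2, e3,
        nearest_eq (A ⟨j,h⟩) (b ⟨j,h⟩) _ (hPj ⟨j,h⟩) xs (hxs ⟨j,h⟩),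
        nearest_eq (A ⟨j,h⟩) (b ⟨j,h⟩) _ (hPj ⟨j,h⟩) xs (hxs ⟨j,h⟩)]
      have : (xs + projSub (LinearMap.ker (A ⟨j,h⟩)) (chainK Pj x j - xs))
          - (xs + projSub (LinearMap.ker (A ⟨j,h⟩)) (chainK Pj (0 : Euc n) j - xs))
          = projSub (LinearMap.ker (A ⟨j,h⟩)) (chainK Pj x j - chainK Pj (0 : Euc n) j) := by
        have e : xs + projSub (LinearMap.ker (A ⟨j,h⟩)) (chainK Pj x j - xs)
            - (xs + projSub (LinearMap.ker (A ⟨j,h⟩)) (chainK Pj (0 : Euc n) j - xs))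
            = projSub (LinearMap.ker (A ⟨j,h⟩)) (chainK Pj x j - xs)
              - projSub (LinearMap.ker (A ⟨j,h⟩)) (chainK Pj (0 : Euc n) j - xs) := by abel
        rw [e, ← map_sub]
        congr 1
        abel
      rw [this, ih]
    · simp only [chainK, Tchain, dif_neg h, ih]

lemma chain_contract {n p : ℕ} (msz : Fin p → ℕ)
    (A : ∀ j : Fin p, Euc n →ₗ[ℝ] Euc (msz j)) (b : ∀ j : Fin p, Euc (msz j))
    (Pj : Fin p → Euc n → Euc n)
    (hPj : ∀ j : Fin p, IsNearestPointMap {z : Euc n | A j z = b j} (Pj j))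
    (xs : Euc n) (hxs : ∀ j, A j xs = b j) (x : Euc n) :
    ∀ j, ‖chainK Pj x j - xs‖ ≤ ‖x - xs‖ := by
  intro j
  induction j with
  | zero => simp [chainK]
  | succ j ih =>
    by_cases h : j < p
    · have e1 : chainK Pj x (j+1) = Pj ⟨j,h⟩ (chainK Pj x j) := by
        simp [chainK, h]
      rw [e1, nearest_eq (A ⟨j,h⟩) (b ⟨j,h⟩) _ (hPj ⟨j,h⟩) xs (hxs ⟨j,h⟩)]
      have e2 : xs + projSub (LinearMap.ker (A ⟨j,h⟩)) (chainK Pj x j - xs) - xs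
          = projSub (LinearMap.ker (A ⟨j,h⟩)) (chainK Pj x j - xs) := by abel
      rw [e2]
      exact le_trans (proj_norm_le _ _) ih
    · simpa only [chainK, dif_neg h] using ih

theorem stmt12
    {n p : ℕ} (msz : Fin p → ℕ)
    (A : ∀ j : Fin p, Euc n →ₗ[ℝ] Euc (msz j))
    (b : ∀ j : Fin p, Euc (msz j))
    (hcons : ∃ z : Euc n, ∀ j, A j z = b j)
    (Pj : Fin p → Euc n → Euc n)
    (hPj : ∀ j : Fin p, IsNearestPointMap {z : Euc n | A j z = b j} (Pj j))
    (x0 xs : Euc n) (hxs : ∀ j, A j xs = b j) (hxs' : xs - x0 ∈ RAT msz A)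
    (k : ℕ) (xk : Euc n)
    (hmin : IsUniqueMinimizer xs
      (affKrylov x0 (Cmap msz A) (kacz Pj (0 : Euc n) - Cmap msz A x0) k) xk)
    (rk : Euc n) (hrk : rk = kacz Pj (0 : Euc n) - Cmap msz A xk) (hrk0 : rk ≠ 0) :
    rk ∉ krylov (Cmap msz A) (kacz Pj (0 : Euc n) - Cmap msz A x0) k ∧
    rk - (Submodule.orthogonalProjectionOnto
        (krylov (Cmap msz A) (kacz Pj (0 : Euc n) - Cmap msz A x0) k) rk : Euc n) ≠ 0 := by

  set g := kacz Pj (0 : Euc n) with hg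
  set C := Cmap msz A with hC
  set K := krylov C (g - C x0) k with hK
  -- key: kacz Pj xk = Tmap xk + g, so xk + rk = kacz Pj xk
  have hkacz : kacz Pj xk - g = Tmap msz A xk := by
    simpa [kacz, Tmap, hg] using chain_affine msz A b Pj hPj xs hxs xk p
  have hsum : xk + rk = kacz Pj xk := by
    have hCxk : C xk = xk - Tmap msz A xk := by
      simp [hC, Cmap, LinearMap.sub_apply]
    rw [hrk, hCxk]
    have := hkacz
    have : kacz Pj xk = Tmap msz A xk + g := by rw [← hkacz]; abel
    rw [this]; abel
  have hcontract : ‖kacz Pj xk - xs‖ ≤ ‖xk - xs‖ :=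
    chain_contract msz A b Pj hPj xs hxs xk p
  have hnotmem : rk ∉ K := by
    intro hmem
    obtain ⟨v, hv, hxk⟩ := hmin.1
    have hy : xk + rk ∈ affKrylov x0 C (g - C x0) k := by
      refine ⟨v + rk, K.add_mem hv hmem, ?_⟩
      simp only at hxk ⊢
      rw [← hxk]; abel
    have hne : xk + rk ≠ xk := by
      intro h
      exact hrk0 (add_eq_left.mp h)
    have hlt := hmin.2 _ hy hne
    have hle : ‖xk + rk - xs‖ ^ 2 ≤ ‖xk - xs‖ ^ 2 := by
      rw [hsum]
      have h0 := norm_nonneg (kacz Pj xk - xs)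
      nlinarith [hcontract, norm_nonneg (xk - xs)]
    linarith
  refine ⟨hnotmem, ?_⟩
  intro h0
  exact hnotmem (by rw [sub_eq_zero.mp h0]; exact SetLike.coe_mem _)


end
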